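/- For |z| < R_f · R_g and any r with |z|/R_g < r < R_f, the Hadamard product satisfies the integral representation (f ⊙ g)(z) = (1/2πi) ∮_{|t|=r} f(t) g(z/t) dt/t. -/

import Mathlib

open Complex Metric
open scoped Real ENNReal NNReal

namespace HadamardAux

lemma radius_le {fc : ℕ → ℂ} {R : ℝ} {f : ℂ → ℂ}
    (hfc : ∀ x : ℂ, ‖x‖ < R → HasSum (fun n : ℕ => fc n * x ^ n) (f x)) :
    ENNReal.ofReal R ≤ (FormalMultilinearSeries.ofScalars ℂ fc).radius := by
  refine ENNReal.le_of_forall_nnreal_lt fun t ht => ?_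
  have htR : (t : ℝ) < R := by
    rw [ENNReal.lt_ofReal_iff_toReal_lt ENNReal.coe_ne_top] at ht
    simpa using ht
  have hx : ‖((t : ℝ) : ℂ)‖ < R := by
    simpa [Complex.norm_real, _root_.abs_of_nonneg t.2] using htR
  have h0 := (hfc _ hx).summable.tendsto_atTop_zero
  refine FormalMultilinearSeries.le_radius_of_tendsto _ (l := 0) ?_
  have h1 : Filter.Tendsto (fun n => ‖fc n * ((t : ℝ) : ℂ) ^ n‖) Filter.atTop (nhds 0) := by
    simpa using h0.norm
  refine h1.congr fun n => ?_
  rw [FormalMultilinearSeries.ofScalars_norm, norm_mul, norm_pow, Complex.norm_real,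
    Real.norm_eq_abs, NNReal.abs_eq]

lemma hasFPS {fc : ℕ → ℂ} {R : ℝ} {f : ℂ → ℂ} (hR : 0 < R)
    (hfc : ∀ x : ℂ, ‖x‖ < R → HasSum (fun n : ℕ => fc n * x ^ n) (f x)) :
    HasFPowerSeriesOnBall f (FormalMultilinearSeries.ofScalars ℂ fc) 0 (ENNReal.ofReal R) := by
  refine ⟨radius_le hfc, ENNReal.ofReal_pos.2 hR, fun {y} hy => ?_⟩
  have hy' : ‖y‖ < R := by
    rw [EMetric.mem_ball, edist_zero_right, ← ofReal_norm] at hy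
    exact (ENNReal.ofReal_lt_ofReal_iff_of_nonneg (norm_nonneg y)).1 hy
  have := hfc y hy'
  simpa only [FormalMultilinearSeries.ofScalars_apply_eq, smul_eq_mul, zero_add,
    mul_comm] using this

lemma coeff_eq {fc : ℕ → ℂ} {Rf : ℝ} {f : ℂ → ℂ} (hRf : 0 < Rf)
    (hfa : DifferentiableOn ℂ f (ball 0 Rf))
    (hfc : ∀ x : ℂ, ‖x‖ < Rf → HasSum (fun n : ℕ => fc n * x ^ n) (f x))
    {r : ℝ} (hr0 : 0 < r) (hr2 : r < Rf) (m : ℕ) :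
    (∮ t in C(0, r), f t / t ^ (m + 1)) = (2 * π * I) * fc m := by
  set rn : NNReal := ⟨r, hr0.le⟩ with hrn
  have hd : DifferentiableOn ℂ f (closedBall (0 : ℂ) rn) :=
    hfa.mono (closedBall_subset_ball (by exact hr2))
  have h1 : HasFPowerSeriesOnBall f (cauchyPowerSeries f 0 rn) 0 rn :=
    hd.hasFPowerSeriesOnBall (by exact_mod_cast hr0)
  have h2 := hasFPS hRf hfc
  have heq := h1.hasFPowerSeriesAt.eq_formalMultilinearSeries h2.hasFPowerSeriesAt
  have happ : (cauchyPowerSeries f 0 rn m fun _ => (1 : ℂ)) = fc m := by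
    rw [heq, FormalMultilinearSeries.ofScalars_apply_eq]
    simp
  rw [cauchyPowerSeries_apply] at happ
  have hne : (2 * ↑π * I : ℂ) ≠ 0 := Complex.two_pi_I_ne_zero
  have hint : (∮ z in C(0, (rn : ℝ)), (1 / (z - 0)) ^ m • (z - 0)⁻¹ • f z)
      = 2 * ↑π * I * fc m := by
    rw [← happ, smul_eq_mul, ← mul_assoc, mul_inv_cancel₀ hne, one_mul]
  rw [show ((rn : ℝ)) = r from rfl] at hint
  rw [← hint]
  refine circleIntegral.integral_congr hr0.le fun t ht => ?_
  have htne : t ≠ 0 := by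
    intro h
    rw [h, mem_sphere_zero_iff_norm, norm_zero] at ht
    exact hr0.ne ht
  simp only [sub_zero, smul_eq_mul, one_div, inv_pow]
  field_simp [pow_succ]
  ring

end HadamardAux

/-- Hadamard product integral representation: if `f` and `g` are analytic on
discs of radii `Rf`, `Rg` with Taylor coefficients `fc`, `gc`, then for
`‖z‖ < Rf·Rg` and any `r` with `‖z‖/Rg < r < Rf`,
`(f ⊙ g)(z) = (1/2πi) ∮_{|t|=r} f(t) g(z/t) dt/t`. -/
theorem hadamard_product_integral_representation
    (f g : ℂ → ℂ) (fc gc : ℕ → ℂ) (Rf Rg : ℝ)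
    (hRf : 0 < Rf) (hRg : 0 < Rg)
    (hfa : DifferentiableOn ℂ f (ball 0 Rf))
    (hga : DifferentiableOn ℂ g (ball 0 Rg))
    (hfc : ∀ x : ℂ, ‖x‖ < Rf → HasSum (fun n : ℕ => fc n * x ^ n) (f x))
    (hgc : ∀ x : ℂ, ‖x‖ < Rg → HasSum (fun n : ℕ => gc n * x ^ n) (g x))
    (z : ℂ) (hz : ‖z‖ < Rf * Rg)
    (r : ℝ) (hr1 : ‖z‖ / Rg < r) (hr2 : r < Rf) :
    HasSum (fun n : ℕ => fc n * gc n * z ^ n)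
      ((2 * Real.pi * Complex.I)⁻¹ *
        ∮ t in C(0, r), f t * g (z / t) / t) := by
  have hr0 : 0 < r := (div_nonneg (norm_nonneg z) hRg.le).trans_lt hr1
  have hzr : ‖z‖ / r < Rg := by
    rw [div_lt_iff₀ hr0]
    rw [div_lt_iff₀ hRg] at hr1
    linarith [hr1]
  have hγ0 : ∀ θ : ℝ, circleMap 0 r θ ≠ 0 := fun θ => circleMap_ne_center hr0.ne'
  have hγnorm : ∀ θ : ℝ, ‖circleMap 0 r θ‖ = r := fun θ => by
    simp [norm_circleMap_zero, _root_.abs_of_nonneg hr0.le]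
  have hmem : ∀ θ : ℝ, circleMap 0 r θ ∈ ball (0 : ℂ) Rf := fun θ => by
    simp [mem_ball_zero_iff, hγnorm θ, hr2]
  have hzmem : ∀ θ : ℝ, ‖z / circleMap 0 r θ‖ < Rg := fun θ => by
    rw [norm_div, hγnorm θ]; exact hzr
  have hγcont : Continuous (circleMap 0 r) := continuous_circleMap 0 r
  have hfcont : Continuous fun θ => f (circleMap 0 r θ) :=
    hfa.continuousOn.comp_continuous hγcont hmem
  obtain ⟨M, hM⟩ : ∃ M, ∀ x ∈ sphere (0 : ℂ) r, ‖f x‖ ≤ M :=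
    (isCompact_sphere (0 : ℂ) r).exists_bound_of_continuousOn
      (hfa.continuousOn.mono (sphere_subset_closedBall.trans (closedBall_subset_ball hr2)))
  have hMγ : ∀ θ, ‖f (circleMap 0 r θ)‖ ≤ M := fun θ =>
    hM _ (circleMap_mem_sphere _ hr0.le θ)
  have hgsum : Summable fun m : ℕ => ‖gc m‖ * (‖z‖ / r) ^ m := by
    set s : NNReal := ⟨‖z‖ / r, div_nonneg (norm_nonneg z) hr0.le⟩ with hs
    have hlt : (s : ℝ≥0∞) < (FormalMultilinearSeries.ofScalars ℂ gc).radius := by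
      refine lt_of_lt_of_le ?_ (HadamardAux.radius_le hgc)
      rw [ENNReal.lt_ofReal_iff_toReal_lt ENNReal.coe_ne_top]
      rw [ENNReal.coe_toReal]; exact hzr
    have := (FormalMultilinearSeries.ofScalars ℂ gc).summable_norm_mul_pow hlt
    exact this.congr fun n => by rw [FormalMultilinearSeries.ofScalars_norm]; rfl
  -- exchange sum and integral
  have key : HasSum
      (fun m : ℕ => ∮ t in C(0, r), gc m * (z / t) ^ m * f t / t)
      (∮ t in C(0, r), f t * g (z / t) / t) := by
    simp only [circleIntegral]
    refine intervalIntegral.hasSum_integral_of_dominated_convergence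
      (fun m θ => ‖gc m‖ * (‖z‖ / r) ^ m * M) (fun m => ?_) (fun m => ?_) ?_ ?_ ?_
    · refine Continuous.aestronglyMeasurable ?_
      simp only [deriv_circleMap]
      exact (hγcont.mul continuous_const).smul
        (((continuous_const.mul ((continuous_const.div hγcont hγ0).pow m)).mul hfcont).div
          hγcont hγ0)
    · refine Filter.Eventually.of_forall fun θ _ => ?_
      rw [norm_smul, deriv_circleMap]
      have h1 : ‖circleMap 0 r θ * I‖ = r := by
        simp [norm_circleMap_zero, _root_.abs_of_nonneg hr0.le]
      rw [h1]
      have h2 : ‖gc m * (z / circleMap 0 r θ) ^ m * f (circleMap 0 r θ) / circleMap 0 r θ‖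
          = ‖gc m‖ * (‖z‖ / r) ^ m * ‖f (circleMap 0 r θ)‖ / r := by
        rw [norm_div, norm_mul, norm_mul, norm_pow, norm_div, hγnorm θ]
      calc r * ‖gc m * (z / circleMap 0 r θ) ^ m * f (circleMap 0 r θ) / circleMap 0 r θ‖
          = ‖gc m‖ * (‖z‖ / r) ^ m * ‖f (circleMap 0 r θ)‖ := by
            rw [h2]; field_simp
        _ ≤ ‖gc m‖ * (‖z‖ / r) ^ m * M := by
            have hnn : 0 ≤ ‖gc m‖ * (‖z‖ / r) ^ m :=
              mul_nonneg (norm_nonneg _) (pow_nonneg (div_nonneg (norm_nonneg z) hr0.le) _)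
            exact mul_le_mul_of_nonneg_left (hMγ θ) hnn
    · exact Filter.Eventually.of_forall fun θ _ => hgsum.mul_right M
    · exact intervalIntegrable_const
    · refine Filter.Eventually.of_forall fun θ _ => ?_
      have h2 := ((hgc (z / circleMap 0 r θ) (hzmem θ)).mul_right
        (f (circleMap 0 r θ) / circleMap 0 r θ)).mul_left (deriv (circleMap 0 r) θ)
      have e1 : ∀ m : ℕ, deriv (circleMap 0 r) θ •
            (gc m * (z / circleMap 0 r θ) ^ m * f (circleMap 0 r θ) / circleMap 0 r θ)
          = deriv (circleMap 0 r) θ *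
            (gc m * (z / circleMap 0 r θ) ^ m * (f (circleMap 0 r θ) / circleMap 0 r θ)) :=
        fun m => by simp only [smul_eq_mul]; ring
      have e2 : deriv (circleMap 0 r) θ •
            (f (circleMap 0 r θ) * g (z / circleMap 0 r θ) / circleMap 0 r θ)
          = deriv (circleMap 0 r) θ *
            (g (z / circleMap 0 r θ) * (f (circleMap 0 r θ) / circleMap 0 r θ)) := by
        simp only [smul_eq_mul]; ring
      simpa only [e1, e2] using h2
  -- compute each circle integral
  have hterm : ∀ m : ℕ, (∮ t in C(0, r), gc m * (z / t) ^ m * f t / t)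
      = gc m * z ^ m * (2 * ↑π * I * fc m) := by
    intro m
    have hc : Set.EqOn (fun t : ℂ => gc m * (z / t) ^ m * f t / t)
        (fun t : ℂ => (gc m * z ^ m) • (f t / t ^ (m + 1))) (sphere 0 r) := by
      intro t ht
      have htne : t ≠ 0 := by
        intro h
        rw [h, mem_sphere_zero_iff_norm, norm_zero] at ht
        exact hr0.ne ht
      simp only [smul_eq_mul, div_pow]
      field_simp [pow_succ]
      ring
    rw [circleIntegral.integral_congr hr0.le hc, circleIntegral.integral_smul,
      HadamardAux.coeff_eq hRf hfa hfc hr0 hr2 m, smul_eq_mul]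
  simp only [hterm] at key
  have final := key.mul_left (2 * ↑π * I : ℂ)⁻¹
  have hne : (2 * ↑π * I : ℂ) ≠ 0 := Complex.two_pi_I_ne_zero
  have e : ∀ m : ℕ, (2 * (π : ℂ) * I)⁻¹ * (gc m * z ^ m * (2 * ↑π * I * fc m))
      = fc m * gc m * z ^ m := fun m => by
    field_simp
  simp only [e] at final
  exact final
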